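/- arXiv:1109.2254 — 4 statements merged into one kernel-verified Lean document; each statement's English description precedes it below -/
import Mathlib

section
/- For r, s ∈ ℤ, the half-turn of the plane about the point (r/2, s/2), inducing the cell map (i,j) ↦ (r−1−i, s−1−j), preserves the thick-striping doubled checkerboard colouring d if and only if r and s are both even and r + s is divisible by 4; equivalently, if and only if the centre of the half-turn is a cell corner lying at the centre or at a corner of a 2×2 block of cells of constant colour of d. -/
/-- The thick-striping (doubled) checkerboard colouring of cells:
`d i j = ⌊i/2⌋ + ⌊j/2⌋ (mod 2)` (floor division). -/
def thickColour (i j : ℤ) : ZMod 2 := ((Int.fdiv i 2 + Int.fdiv j 2 : ℤ) : ZMod 2)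

lemma thickColour_modEq (a b c d : ℤ) :
    thickColour a b = thickColour c d ↔
      (a / 2 + b / 2) % 2 = (c / 2 + d / 2) % 2 := by
  unfold thickColour
  rw [ZMod.intCast_eq_intCast_iff, Int.fdiv_eq_ediv_of_nonneg _ (by norm_num),
    Int.fdiv_eq_ediv_of_nonneg _ (by norm_num), Int.fdiv_eq_ediv_of_nonneg _ (by norm_num),
    Int.fdiv_eq_ediv_of_nonneg _ (by norm_num)]
  exact Iff.rfl

/-- The half-turn about `(r/2, s/2)`, inducing the cell map
`(i,j) ↦ (r−1−i, s−1−j)`, preserves the thick-striping doubled checkerboard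
colouring iff `r` and `s` are both even and `4 ∣ r + s`; equivalently, iff the
centre is a cell corner lying at the centre or at a corner of a 2×2 block of
cells of constant colour. -/
theorem halfTurn_preserves_thickColour_iff (r s : ℤ) :
    (∀ i j : ℤ, thickColour (r - 1 - i) (s - 1 - j) = thickColour i j) ↔
      (Even r ∧ Even s ∧ (4 : ℤ) ∣ r + s) := by
  constructor
  · intro h
    have h00 := (thickColour_modEq _ _ _ _).mp (h 0 0)
    have h10 := (thickColour_modEq _ _ _ _).mp (h 1 0)
    have h01 := (thickColour_modEq _ _ _ _).mp (h 0 1)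
    refine ⟨Int.even_iff.mpr ?_, Int.even_iff.mpr ?_, ?_⟩ <;> omega
  · rintro ⟨hr, hs, h4⟩ i j
    rw [thickColour_modEq]
    rw [Int.even_iff] at hr hs
    omega
end

section
/- For r, s ∈ ℤ with r ≡ s (mod 2), the quarter-turn of the plane about the point (r/2, s/2), inducing the cell map (i,j) ↦ ((r+s)/2 − 1 − j, (s−r)/2 + i), preserves the thick-striping doubled checkerboard colouring d if and only if r ≡ 2 (mod 4) and s ≡ 2 (mod 4); equivalently, if and only if the centre of the quarter-turn is a cell corner (a, b) with a and b both odd, i.e. the centre of a 2×2 block of cells of constant colour of d. -/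
lemma thickColour_eq_iff (x y i j : ℤ) :
    thickColour x y = thickColour i j ↔ (x / 2 + y / 2) % 2 = (i / 2 + j / 2) % 2 := by
  unfold thickColour
  rw [Int.fdiv_eq_ediv_of_nonneg _ (by norm_num), Int.fdiv_eq_ediv_of_nonneg _ (by norm_num),
      Int.fdiv_eq_ediv_of_nonneg _ (by norm_num), Int.fdiv_eq_ediv_of_nonneg _ (by norm_num),
      ZMod.intCast_eq_intCast_iff']
  norm_num

/-- For `r ≡ s (mod 2)`, the quarter-turn about `(r/2, s/2)`, inducing the cell
map `(i,j) ↦ ((r+s)/2 − 1 − j, (s−r)/2 + i)`, preserves the thick-striping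
doubled checkerboard colouring iff `r ≡ 2 (mod 4)` and `s ≡ 2 (mod 4)`, i.e.
iff the centre is a cell corner `(a, b)` with `a`, `b` both odd, the centre of
a 2×2 block of cells of constant colour. -/
theorem quarterTurn_preserves_thickColour_iff (r s : ℤ) (h : r % 2 = s % 2) :
    (∀ i j : ℤ, thickColour ((r + s) / 2 - 1 - j) ((s - r) / 2 + i) = thickColour i j) ↔
      (r % 4 = 2 ∧ s % 4 = 2) := by
  simp only [thickColour_eq_iff]
  constructor
  · intro H
    have h00 := H 0 0
    have h10 := H 1 0
    have h01 := H 0 1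
    have h11 := H 1 1
    have h20 := H 2 0
    have h02 := H 0 2
    have h22 := H 2 2
    have h30 := H 3 0
    have h03 := H 0 3
    omega
  · rintro ⟨h1, h2⟩ i j
    omega
end

section
/- For k, t ∈ ℤ, the glide-reflection of the plane whose axis is the diagonal line y = x + k and whose glide is the translation by (t, t), inducing the cell map (i,j) ↦ (j − k + t, i + k + t), preserves the thick-striping doubled checkerboard colouring d if and only if k and t are both even. -/
/-- The glide-reflection with axis `y = x + k` and glide `(t, t)`, inducing the
cell map `(i,j) ↦ (j − k + t, i + k + t)`, preserves the thick-striping doubled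
checkerboard colouring iff `k` and `t` are both even. -/
theorem glideReflection_preserves_thickColour_iff (k t : ℤ) :
    (∀ i j : ℤ, thickColour (j - k + t) (i + k + t) = thickColour i j) ↔
      (Even k ∧ Even t) := by
  have cast2 : ((2 : ℕ) : ℤ) = 2 := by norm_num
  simp only [thickColour, Int.fdiv_eq_ediv_of_nonneg _ (by norm_num : (0:ℤ) ≤ 2),
    ZMod.intCast_eq_intCast_iff', cast2]
  constructor
  · intro h
    have h1 := h 0 0
    have h2 := h 1 0
    have h3 := h 0 1
    have h4 := h 1 1
    have h5 := h 2 0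
    have h6 := h 0 2
    rcases Int.even_or_odd k with ⟨a, rfl⟩ | ⟨a, rfl⟩ <;>
      rcases Int.even_or_odd t with ⟨b, rfl⟩ | ⟨b, rfl⟩ <;>
      first
      | exact ⟨⟨a, rfl⟩, ⟨b, rfl⟩⟩
      | (exfalso; omega)
  · rintro ⟨⟨a, rfl⟩, ⟨b, rfl⟩⟩ i j
    omega
end

section
/- For k, t ∈ ℤ, the glide-reflection of the plane whose axis is the anti-diagonal line y = −x + k and whose glide is the translation by (t, −t), inducing the cell map (i,j) ↦ (k − 1 − j + t, k − 1 − i − t), preserves the thick-striping doubled checkerboard colouring d if and only if k and t are both even. -/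
/-- The glide-reflection with axis `y = −x + k` and glide `(t, −t)`, inducing
the cell map `(i,j) ↦ (k − 1 − j + t, k − 1 − i − t)`, preserves the
thick-striping doubled checkerboard colouring iff `k` and `t` are both even. -/
theorem antidiagonal_glideReflection_preserves_thickColour_iff (k t : ℤ) :
    (∀ i j : ℤ, thickColour (k - 1 - j + t) (k - 1 - i - t) = thickColour i j) ↔
      (Even k ∧ Even t) := by
  constructor
  · intro H
    have h00 := H 0 0
    have h10 := H 1 0
    have h01 := H 0 1
    simp only [thickColour, Int.fdiv_eq_ediv_of_nonneg _ (by norm_num : (0:ℤ) ≤ 2), ZMod.intCast_eq_intCast_iff', Nat.cast_ofNat] at h00 h10 h01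
    refine ⟨?_, ?_⟩ <;> rw [Int.even_iff] <;> omega
  · rintro ⟨⟨a, rfl⟩, ⟨b, rfl⟩⟩ i j
    simp only [thickColour, Int.fdiv_eq_ediv_of_nonneg _ (by norm_num : (0:ℤ) ≤ 2), ZMod.intCast_eq_intCast_iff', Nat.cast_ofNat]
    omega
end
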